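/- Suppose (T, ⊑) is finite with least element ⊥ and any two elements of T having a common upper bound are comparable. Then the program Π is inconsistent if and only if there exist i ∈ ℕ and a literal ℓ such that the iterates T_Π↑0, …, T_Π↑i are all defined and annoSet(Π, T_Π↑i, ℓ) contains two elements μ, μ' with μ ⋢ μ' and μ' ⋢ μ (i.e., two incomparable annotations). -/

import Mathlib

/-- A ground GAP rule: a head literal (element of `A × Bool`) with a head
annotation in `T`, together with a finite set of body pairs of literals
with annotations. -/
structure GAPRule (A T : Type*) where
  head : A × Bool
  headAnn : T
  body : Set ((A × Bool) × T)
  body_finite : body.Finite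

/-- An interpretation `I` satisfies the annotated literal `ℓ:μ` iff `μ ⊑ I ℓ`. -/
def satLit {A T : Type*} [PartialOrder T] (I : A × Bool → T) (ℓ : A × Bool) (μ : T) : Prop :=
  μ ≤ I ℓ

/-- An interpretation satisfies a rule iff it satisfies the head annotated
literal or fails to satisfy some body annotated literal. -/
def satRule {A T : Type*} [PartialOrder T] (I : A × Bool → T) (r : GAPRule A T) : Prop :=
  satLit I r.head r.headAnn ∨ ∃ p ∈ r.body, ¬ satLit I p.1 p.2

/-- `I` is a model of a program `P` iff it satisfies every rule of `P`. -/
def isModel {A T : Type*} [PartialOrder T] (I : A × Bool → T) (P : Set (GAPRule A T)) : Prop :=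
  ∀ r ∈ P, satRule I r

/-- `annoSet P I ℓ = {I ℓ} ∪ {μ₀ : some rule of P has head ℓ:μ₀ and I satisfies
every body annotated literal of that rule}`. -/
def annoSet {A T : Type*} [PartialOrder T] (P : Set (GAPRule A T)) (I : A × Bool → T)
    (ℓ : A × Bool) : Set T :=
  {I ℓ} ∪ {μ | ∃ r ∈ P, r.head = ℓ ∧ r.headAnn = μ ∧ ∀ p ∈ r.body, satLit I p.1 p.2}

/-- Suppose `T` is finite with least element `⊥` and any two
elements of `T` with a common upper bound are comparable.  Then the program `P`
is inconsistent iff there exist `i ∈ ℕ` and a literal `ℓ` such that the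
iterates `T_Π↑0, …, T_Π↑i` are all defined and `annoSet P (T_Π↑i) ℓ` contains
two incomparable annotations `μ, μ'`. -/
lemma exists_isLUB_of_chain' {T : Type*} [PartialOrder T] [Fintype T]
    {S : Set T} (hne : S.Nonempty)
    (hch : ∀ a ∈ S, ∀ b ∈ S, a ≤ b ∨ b ≤ a) : ∃ m, IsLUB S m := by
  have hfin : S.Finite := Set.toFinite S
  obtain ⟨a, haF, hmax⟩ := hfin.toFinset.exists_maximal (by simpa using hne)
  have haS : a ∈ S := hfin.mem_toFinset.mp haF
  refine ⟨a, ?_, fun c hc => hc haS⟩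
  intro b hb
  rcases hch b hb a haS with h | h
  · exact h
  · rcases eq_or_lt_of_le h with h' | h'
    · exact h'.ge
    · exact absurd (lt_of_lt_of_le h' (hmax (hfin.mem_toFinset.mpr hb) h'.le)) (lt_irrefl a)

lemma annoSet_le' {A T : Type*} [PartialOrder T] {P : Set (GAPRule A T)}
    {I M : A × Bool → T} (hIM : ∀ l, I l ≤ M l) (hM : isModel M P)
    {ℓ : A × Bool} {μ : T} (hμ : μ ∈ annoSet P I ℓ) : μ ≤ M ℓ := by
  rcases hμ with hμ | ⟨r, hrP, hhead, hann, hbody⟩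
  · exact hμ ▸ hIM ℓ
  · rcases hM r hrP with h | ⟨p, hp, hps⟩
    · exact hann ▸ hhead ▸ h
    · exact absurd (le_trans (hbody p hp) (hIM p.1)) hps

open Classical in
noncomputable def iterStep {A T : Type*} [PartialOrder T]
    (P : Set (GAPRule A T)) (I : A × Bool → T) : A × Bool → T :=
  fun ℓ => if h : ∃ m, IsLUB (annoSet P I ℓ) m then h.choose else I ℓ

noncomputable def iterSeq {A T : Type*} [PartialOrder T] [OrderBot T]
    (P : Set (GAPRule A T)) : ℕ → (A × Bool → T)
  | 0 => fun _ => ⊥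
  | (k+1) => iterStep P (iterSeq P k)

theorem inconsistent_iff_incomparable_annotations {A T : Type*} [Fintype A] [Nonempty A]
    [PartialOrder T] [Fintype T] [OrderBot T]
    (hcomp : ∀ a b : T, (∃ c : T, a ≤ c ∧ b ≤ c) → a ≤ b ∨ b ≤ a)
    (P : Set (GAPRule A T)) (hfin : P.Finite) :
    (¬ ∃ M : A × Bool → T, isModel M P) ↔
      ∃ (i : ℕ) (seq : ℕ → (A × Bool → T)),
        seq 0 = (fun _ : A × Bool => (⊥ : T)) ∧
        (∀ k : ℕ, k < i → ∀ ℓ : A × Bool, IsLUB (annoSet P (seq k) ℓ) (seq (k + 1) ℓ)) ∧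
        ∃ (ℓ : A × Bool) (μ μ' : T),
          μ ∈ annoSet P (seq i) ℓ ∧ μ' ∈ annoSet P (seq i) ℓ ∧ ¬ μ ≤ μ' ∧ ¬ μ' ≤ μ := by
  constructor
  · intro hL
    by_contra hR
    -- all iterates are defined and are LUBs
    have key : ∀ i : ℕ, ∀ ℓ : A × Bool,
        IsLUB (annoSet P (iterSeq P i) ℓ) (iterSeq P (i+1) ℓ) := by
      intro i
      induction i using Nat.strong_induction_on with
      | _ i IH =>
        intro ℓ
        have hchain : ∀ a ∈ annoSet P (iterSeq P i) ℓ, ∀ b ∈ annoSet P (iterSeq P i) ℓ,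
            a ≤ b ∨ b ≤ a := by
          intro a ha b hb
          by_contra hc
          push_neg at hc
          exact hR ⟨i, iterSeq P, rfl, fun k hk => IH k hk, ℓ, a, b, ha, hb, hc.1, hc.2⟩
        have hne : (annoSet P (iterSeq P i) ℓ).Nonempty := ⟨_, Or.inl rfl⟩
        have hex : ∃ m, IsLUB (annoSet P (iterSeq P i) ℓ) m :=
          exists_isLUB_of_chain' hne hchain
        have : iterSeq P (i+1) ℓ = hex.choose := by
          show iterStep P (iterSeq P i) ℓ = _
          rw [iterStep, dif_pos hex]
        rw [this]
        exact hex.choose_spec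
    -- monotonicity
    have mono1 : ∀ i : ℕ, ∀ ℓ, iterSeq P i ℓ ≤ iterSeq P (i+1) ℓ :=
      fun i ℓ => (key i ℓ).1 (Or.inl rfl)
    have mono : ∀ m n : ℕ, m ≤ n → ∀ ℓ, iterSeq P m ℓ ≤ iterSeq P n ℓ := by
      intro m n hmn
      induction n, hmn using Nat.le_induction with
      | base => exact fun _ => le_rfl
      | succ n hmn IH => exact fun ℓ => le_trans (IH ℓ) (mono1 n ℓ)
    -- stabilization by pigeonhole
    obtain ⟨m, n, hne, heq⟩ := Finite.exists_ne_map_eq_of_infinite (iterSeq P)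
    wlog hmn : m < n generalizing m n
    · exact this n m hne.symm heq.symm (hne.lt_or_gt.resolve_left hmn)
    have hfix : iterSeq P (m+1) = iterSeq P m := by
      funext ℓ
      refine le_antisymm ?_ (mono1 m ℓ)
      calc iterSeq P (m+1) ℓ ≤ iterSeq P n ℓ := mono (m+1) n hmn ℓ
        _ = iterSeq P m ℓ := by rw [← heq]
    -- iterSeq P m is a model
    refine hL ⟨iterSeq P m, fun r hr => ?_⟩
    by_cases hb : ∀ p ∈ r.body, satLit (iterSeq P m) p.1 p.2
    · left
      have hmem : r.headAnn ∈ annoSet P (iterSeq P m) r.head :=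
        Or.inr ⟨r, hr, rfl, rfl, hb⟩
      have := (key m r.head).1 hmem
      rwa [hfix] at this
    · right
      push_neg at hb
      obtain ⟨p, hp, hps⟩ := hb
      exact ⟨p, hp, hps⟩
  · rintro ⟨i, seq, h0, hlub, ℓ, μ, μ', hμ, hμ', h1, h2⟩
    rintro ⟨M, hM⟩
    have hbound : ∀ k ≤ i, ∀ l, seq k l ≤ M l := by
      intro k hk
      induction k with
      | zero => intro l; rw [h0]; exact bot_le
      | succ k IH =>
        intro l
        have IH' := IH (le_of_lt (Nat.lt_of_succ_le hk))
        exact (hlub k (Nat.lt_of_succ_le hk) l).2 fun x hx => annoSet_le' IH' hM hx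
    have hμM : μ ≤ M ℓ := annoSet_le' (hbound i le_rfl) hM hμ
    have hμ'M : μ' ≤ M ℓ := annoSet_le' (hbound i le_rfl) hM hμ'
    rcases hcomp μ μ' ⟨M ℓ, hμM, hμ'M⟩ with h | h
    · exact h1 h
    · exact h2 h
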